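/- The pentagonal quasilattice, i.e. the additive subgroup of ℂ generated by the five fifth roots of unity e^{2πik/5}, k = 0, 1, 2, 3, 4 (their set of integer linear combinations), is dense in ℂ; in particular it is not a discrete subgroup of ℂ, hence it is not a lattice. -/

import Mathlib

open Complex

/-- The pentagonal quasilattice: the set of integer linear combinations of the five
fifth roots of unity `e^{2πik/5}`, `k = 0, …, 4`. -/
noncomputable def pentagonalQuasilattice : Set ℂ :=
  {z | ∃ a : Fin 5 → ℤ,
    z = ∑ k : Fin 5, (a k : ℂ) * Complex.exp (2 * Real.pi * Complex.I * (k : ℕ) / 5)}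

namespace PQaux

noncomputable def ζ : ℂ := Complex.exp (2 * Real.pi * Complex.I / 5)

noncomputable def θ : ℝ := (Real.sqrt 5 - 1) / 2

lemma θ_irrational : Irrational θ := by
  have h5 : Irrational (Real.sqrt 5) := by
    simpa using (by norm_num : Nat.Prime 5).irrational_sqrt
  have := (h5.sub_intCast 1).div_intCast (m := 2) (by norm_num)
  simpa [θ] using this

lemma hexp (k : ℕ) : Complex.exp (2 * Real.pi * Complex.I * k / 5) = ζ ^ k := by
  rw [ζ, ← Complex.exp_nat_mul]; congr 1; ring

lemma hζ5 : ζ ^ 5 = 1 := by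
  rw [← hexp 5, show (2 * (Real.pi:ℂ) * I * (5:ℕ) / 5) = 2 * Real.pi * I by push_cast; ring,
    Complex.exp_two_pi_mul_I]

lemma hζ' : ζ = Complex.exp ((2 * Real.pi / 5 : ℝ) * I) := by
  rw [ζ]; congr 1; push_cast; ring

lemma θC : (θ : ℂ) = ζ + ζ ^ 4 := by
  have hre : ζ.re = Real.cos (2 * Real.pi / 5) := by
    rw [hζ']; exact Complex.exp_ofReal_mul_I_re _
  have hconj : (starRingEnd ℂ) ζ = ζ ^ 4 := by
    have h1 : (starRingEnd ℂ) ζ = Complex.exp (-(2 * Real.pi * I / 5)) := by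
      rw [ζ, ← Complex.exp_conj]; congr 1
      simp [map_div₀, map_ofNat, Complex.conj_I]
      ring
    have h2 : ζ ^ 4 = Complex.exp (-(2 * Real.pi * I / 5)) := by
      rw [← hexp 4, show (2 * (Real.pi:ℂ) * I * (4:ℕ) / 5)
          = 2 * Real.pi * I + -(2 * Real.pi * I / 5) by push_cast; ring,
        Complex.exp_add, Complex.exp_two_pi_mul_I, one_mul]
    rw [h1, h2]
  have key : ζ + ζ ^ 4 = ((2 * Real.cos (2 * Real.pi / 5) : ℝ) : ℂ) := by
    rw [← hconj, Complex.add_conj, hre]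
  have hcos : Real.cos (2 * Real.pi / 5) = (Real.sqrt 5 - 1) / 4 := by
    rw [show 2 * Real.pi / 5 = 2 * (Real.pi / 5) by ring, Real.cos_two_mul,
      Real.cos_pi_div_five]
    have h5 : Real.sqrt 5 * Real.sqrt 5 = 5 := Real.mul_self_sqrt (by norm_num)
    nlinarith [h5]
  have : θ = 2 * Real.cos (2 * Real.pi / 5) := by rw [hcos, θ]; ring
  rw [key]; exact_mod_cast this

noncomputable def S : AddSubgroup ℝ where
  carrier := {x | ∃ m n : ℤ, x = m + n * θ}
  add_mem' := by rintro x y ⟨m, n, rfl⟩ ⟨m', n', rfl⟩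
                 exact ⟨m + m', n + n', by push_cast; ring⟩
  zero_mem' := ⟨0, 0, by simp⟩
  neg_mem' := by rintro x ⟨m, n, rfl⟩; exact ⟨-m, -n, by push_cast; ring⟩

lemma S_dense : Dense (S : Set ℝ) := by
  rcases S.dense_or_cyclic with h | ⟨a, ha⟩
  · exact h
  · exfalso
    have h1 : (1 : ℝ) ∈ S := ⟨1, 0, by simp⟩
    have hθ : θ ∈ S := ⟨0, 1, by simp⟩
    rw [ha, AddSubgroup.mem_closure_singleton] at h1 hθ
    obtain ⟨k, hk⟩ := h1; obtain ⟨l, hl⟩ := hθ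
    have hk' : (k : ℝ) * a = 1 := by rw [← zsmul_eq_mul]; exact hk
    have hl' : (l : ℝ) * a = θ := by rw [← zsmul_eq_mul]; exact hl
    have hk0 : (k : ℝ) ≠ 0 := by
      intro h; rw [h, zero_mul] at hk'; exact one_ne_zero hk'.symm
    refine θ_irrational ⟨(l : ℚ) / (k : ℚ), ?_⟩
    push_cast
    rw [← hl', div_eq_iff hk0]
    linear_combination (-(l : ℝ)) * hk'


lemma mem_Q (a b : ℝ) (ha : a ∈ S) (hb : b ∈ S) :
    (a : ℂ) + (b : ℂ) * ζ ∈ pentagonalQuasilattice := by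
  obtain ⟨m, n, rfl⟩ := ha
  obtain ⟨m', n', rfl⟩ := hb
  refine ⟨![m + n', n + m', n', 0, n], ?_⟩
  have e : ∀ k : Fin 5, Complex.exp (2 * Real.pi * Complex.I * ((k : ℕ) : ℂ) / 5)
      = ζ ^ (k : ℕ) := fun k => hexp k
  simp only [e]
  rw [Fin.sum_univ_five]
  push_cast
  rw [θC]
  simp [Matrix.cons_val_zero, Matrix.cons_val_one, Matrix.head_cons]
  linear_combination (n' : ℂ) * hζ5

lemma ζ_im_pos : 0 < ζ.im := by
  have : ζ.im = Real.sin (2 * Real.pi / 5) := by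
    rw [hζ']; exact Complex.exp_ofReal_mul_I_im _
  rw [this]
  apply Real.sin_pos_of_pos_of_lt_pi <;> nlinarith [Real.pi_pos]

lemma abs_ζ : ‖ζ‖ = 1 := by
  rw [ζ, Complex.norm_exp]
  norm_num [Complex.div_re, Complex.mul_re, Complex.I_re, Complex.I_im]

lemma Q_dense : Dense pentagonalQuasilattice := by
  rw [Metric.dense_iff]
  intro z r hr
  have him : ζ.im ≠ 0 := ne_of_gt ζ_im_pos
  set t : ℝ := z.im / ζ.im with ht
  set s : ℝ := z.re - t * ζ.re with hs
  obtain ⟨a, haS, hda⟩ := S_dense.exists_dist_lt s (half_pos hr)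
  obtain ⟨b, hbS, hdb⟩ := S_dense.exists_dist_lt t (half_pos hr)
  refine ⟨(a : ℂ) + (b : ℂ) * ζ, ?_, mem_Q a b haS hbS⟩
  have hz : z = (s : ℂ) + (t : ℂ) * ζ := by
    apply Complex.ext
    · simp [Complex.add_re, Complex.mul_re, hs]
    · simp [Complex.add_im, Complex.mul_im, ht, div_mul_cancel₀ _ him]
  rw [Metric.mem_ball, Complex.dist_eq, hz]
  have key : (a : ℂ) + (b : ℂ) * ζ - ((s : ℂ) + (t : ℂ) * ζ)
      = ((a - s : ℝ) : ℂ) + ((b - t : ℝ) : ℂ) * ζ := by push_cast; ring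
  rw [key]
  calc ‖(((a - s : ℝ) : ℂ) + ((b - t : ℝ) : ℂ) * ζ)‖
      ≤ ‖((a - s : ℝ) : ℂ)‖ + ‖(((b - t : ℝ) : ℂ) * ζ)‖ :=
        norm_add_le _ _
    _ = |a - s| + |b - t| := by
        rw [norm_mul, abs_ζ, mul_one, Complex.norm_real, Complex.norm_real, Real.norm_eq_abs,
            Real.norm_eq_abs]
    _ < r / 2 + r / 2 := by
        rw [Real.dist_eq] at hda hdb
        rw [abs_sub_comm a s, abs_sub_comm b t]
        exact add_lt_add hda hdb
    _ = r := by ring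

end PQaux

/-- The pentagonal quasilattice is dense in `ℂ`; in particular it is not a discrete
subgroup of `ℂ`, hence it is not a lattice (the `ℤ`-span of a basis of `ℝ² ≅ ℂ`). -/
theorem pentagonalQuasilattice_dense_not_discrete_not_lattice :
    Dense pentagonalQuasilattice ∧
    ¬ DiscreteTopology pentagonalQuasilattice ∧
    ¬ ∃ v₁ v₂ : ℂ, LinearIndependent ℝ ![v₁, v₂] ∧
        pentagonalQuasilattice =
          {z : ℂ | ∃ m n : ℤ, z = (m : ℂ) * v₁ + (n : ℂ) * v₂} := by
  have hQd := PQaux.Q_dense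
  refine ⟨hQd, ?_, ?_⟩
  · intro hd
    have h0 : (0 : ℂ) ∈ pentagonalQuasilattice := ⟨0, by simp⟩
    have hop : IsOpen ({⟨0, h0⟩} : Set pentagonalQuasilattice) := isOpen_discrete _
    rw [isOpen_induced_iff] at hop
    obtain ⟨U, hU, hUeq⟩ := hop
    have h0U : (0 : ℂ) ∈ U := by
      have : (⟨0, h0⟩ : pentagonalQuasilattice) ∈ Subtype.val ⁻¹' U := by
        rw [hUeq]; rfl
      exact this
    obtain ⟨ε, hε, hball⟩ := Metric.isOpen_iff.mp hU 0 h0U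
    obtain ⟨w, hwQ, hw⟩ := hQd.exists_dist_lt (((ε / 2 : ℝ)) : ℂ)
      (by positivity : (0:ℝ) < ε / 4)
    have hwball : w ∈ Metric.ball (0 : ℂ) ε := by
      rw [Metric.mem_ball, Complex.dist_eq, sub_zero]
      have h1 : ‖(w - ((ε/2 : ℝ) : ℂ))‖ < ε / 4 := by
        rw [Complex.dist_eq] at hw
        rwa [← norm_neg, neg_sub] at hw
      calc ‖w‖
          ≤ ‖(w - ((ε/2 : ℝ) : ℂ))‖ + ‖(((ε/2 : ℝ)) : ℂ)‖ := by
            simpa using norm_add_le (w - ((ε/2 : ℝ) : ℂ)) (((ε/2 : ℝ)) : ℂ)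
        _ < ε / 4 + ε / 2 := by
            rw [Complex.norm_real, Real.norm_eq_abs, abs_of_pos (by positivity)]
            exact add_lt_add_left h1 _
        _ < ε := by linarith
    have hmem : (⟨w, hwQ⟩ : pentagonalQuasilattice) ∈ Subtype.val ⁻¹' U :=
      hball hwball
    rw [hUeq, Set.mem_singleton_iff] at hmem
    have hw0 : w = 0 := congrArg Subtype.val hmem
    rw [hw0, Complex.dist_eq, sub_zero, Complex.norm_real, Real.norm_eq_abs,
      abs_of_pos (by positivity)] at hw
    linarith
  · rintro ⟨v₁, v₂, hli, heq⟩
    have hcard : Fintype.card (Fin 2) = Module.finrank ℝ ℂ := by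
      simp [Complex.finrank_real_complex]
    set b := basisOfLinearIndependentOfCardEqFinrank hli hcard with hbdef
    have hb : ⇑b = ![v₁, v₂] := coe_basisOfLinearIndependentOfCardEqFinrank hli hcard
    set f : ℂ →ₗ[ℝ] ℝ := b.coord 0 with hfdef
    have hb0 : b 0 = v₁ := by rw [show b 0 = (⇑b) 0 from rfl, hb]; rfl
    have hb1 : b 1 = v₂ := by rw [show b 1 = (⇑b) 1 from rfl, hb]; rfl
    have hf1 : f v₁ = 1 := by rw [← hb0, hfdef, Module.Basis.coord_apply, Module.Basis.repr_self]; simp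
    have hf2 : f v₂ = 0 := by rw [← hb1, hfdef, Module.Basis.coord_apply, Module.Basis.repr_self]; simp
    have hfc : Continuous f := f.continuous_of_finiteDimensional
    have himg : f '' pentagonalQuasilattice ⊆ Set.range ((↑) : ℤ → ℝ) := by
      rintro x ⟨z, hz, rfl⟩
      rw [heq] at hz
      obtain ⟨m, n, rfl⟩ := hz
      refine ⟨m, ?_⟩
      have e1 : ((m : ℂ) * v₁ + (n : ℂ) * v₂) = (m : ℝ) • v₁ + (n : ℝ) • v₂ := by
        rw [Complex.real_smul, Complex.real_smul]; push_cast; ring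
      rw [e1, map_add, map_smul, map_smul, hf1, hf2, smul_eq_mul, smul_eq_mul]
      ring
    have hsurj : Set.range f = Set.univ := by
      ext r
      simp only [Set.mem_range, Set.mem_univ, iff_true]
      exact ⟨r • v₁, by rw [map_smul, hf1, smul_eq_mul, mul_one]⟩
    have hdense2 : Dense (f '' pentagonalQuasilattice) := by
      intro x
      have h2 : f '' closure pentagonalQuasilattice = Set.univ := by
        rw [hQd.closure_eq, Set.image_univ, hsurj]
      have h1 : f '' closure pentagonalQuasilattice
          ⊆ closure (f '' pentagonalQuasilattice) :=
        image_closure_subset_closure_image hfc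
      exact h1 (h2 ▸ Set.mem_univ x)
    have hclosed : IsClosed (Set.range ((↑) : ℤ → ℝ)) :=
      Int.isClosedEmbedding_coe_real.isClosed_range
    have hhalf : (1/2 : ℝ) ∈ Set.range ((↑) : ℤ → ℝ) :=
      closure_minimal himg hclosed (hdense2 (1/2 : ℝ))
    obtain ⟨m, hm⟩ := hhalf
    have h2m : ((2 * m : ℤ) : ℝ) = ((1 : ℤ) : ℝ) := by push_cast; linarith
    have := Int.cast_injective h2m
    omega
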